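/- Let d, m_1, m_2, m_3, m_4 be natural numbers with m_i ≤ d for all i, 2d ≥ m_i + m_j + m_l for every three-element subset {i,j,l} ⊆ {1,2,3,4}, and 2d < m_1 + m_2 + m_3 + m_4. Set t_{ij} = m_i + m_j − d for 1 ≤ i < j ≤ 4. Then Σ_{1 ≤ i < j ≤ 4, t_{ij} ≥ 2} C(1 + t_{ij}, 3) − Σ_{1 ≤ i < j ≤ 4, t_{ij} ≤ −2} C(1 − t_{ij}, 3) ≥ 0. Equivalently, if the cubic Cremona transformation based at the four points strictly decreases the degree of the system L_3(d, m_1, …, m_4), then the virtual dimension of the transformed system is greater than or equal to the virtual dimension of the original system. -/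

import Mathlib

/-- `C(n,3) = n(n-1)(n-2)/6` for an integer `n`. -/
def intChoose3 (n : ℤ) : ℤ := n * (n - 1) * (n - 2) / 6


lemma six_dvd (n : ℤ) : (6:ℤ) ∣ n * (n - 1) * (n - 2) := by
  have h : ((n * (n - 1) * (n - 2) : ℤ) : ZMod 6) = 0 := by
    push_cast
    generalize (n : ZMod 6) = x
    revert x; decide
  exact (ZMod.intCast_zmod_eq_zero_iff_dvd _ 6).mp h

lemma six_mul_choose (n : ℤ) : 6 * intChoose3 n = n * (n - 1) * (n - 2) :=
  Int.mul_ediv_cancel' (six_dvd n)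

lemma fnonneg (x : ℤ) (h : -1 ≤ x) : 0 ≤ x^3 - x := by
  rcases le_or_gt x 0 with h0 | h0
  · interval_cases x <;> norm_num
  · have h1 : 1 ≤ x := h0
    nlinarith [mul_nonneg (mul_nonneg (by linarith : (0:ℤ) ≤ x - 1) (by linarith : (0:ℤ) ≤ x)) (by linarith : (0:ℤ) ≤ x + 1)]

lemma pairf (a b : ℤ) (h : 1 ≤ a + b) : 0 ≤ (a^3 - a) + (b^3 - b) := by
  rcases le_or_gt a (-2) with ha | ha
  · have hb : 3 ≤ b := by linarith
    have p : (0:ℤ) ≤ (a + b - 1) * (b^2 + b*(1-a) + (1-a)^2 - 1) := by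
      apply mul_nonneg (by linarith)
      nlinarith
    have q : (0:ℤ) ≤ 3 * a * (a - 1) := by nlinarith
    nlinarith [p, q]
  · rcases le_or_gt b (-2) with hb | hb
    · have ha' : 3 ≤ a := by linarith
      have p : (0:ℤ) ≤ (b + a - 1) * (a^2 + a*(1-b) + (1-b)^2 - 1) := by
        apply mul_nonneg (by linarith)
        nlinarith
      have q : (0:ℤ) ≤ 3 * b * (b - 1) := by nlinarith
      nlinarith [p, q]
    · have := fnonneg a (by omega)
      have := fnonneg b (by omega)
      linarith

lemma key (t : ℤ) :
    6 * ((if 2 ≤ t then intChoose3 (1 + t) else 0) -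
      (if t ≤ -2 then intChoose3 (1 - t) else 0)) = t^3 - t := by
  rcases le_or_gt 2 t with h | h
  · rw [if_pos h, if_neg (by omega)]
    rw [mul_sub, six_mul_choose]; ring
  · rcases le_or_gt t (-2) with h2 | h2
    · rw [if_neg (by omega), if_pos h2]
      rw [mul_sub, six_mul_choose]; ring
    · rw [if_neg (by omega), if_neg (by omega)]
      interval_cases t <;> norm_num

/-- If the cubic Cremona transformation based at the four points strictly decreases the
degree of `L_3(d, m_1, …, m_4)` (i.e. `2d < m_1 + m_2 + m_3 + m_4`), then
`∑_{t_{ij} ≥ 2} C(1+t_{ij},3) - ∑_{t_{ij} ≤ -2} C(1-t_{ij},3) ≥ 0`; equivalently the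
virtual dimension of the transformed system is at least that of the original one. -/
theorem cremona_decreasing_degree_nonneg
    (d : ℕ) (m : Fin 4 → ℕ)
    (hm : ∀ i, m i ≤ d)
    (h3 : ∀ i j l : Fin 4, i ≠ j → i ≠ l → j ≠ l → (m i : ℤ) + m j + m l ≤ 2 * d)
    (hdec : 2 * (d : ℤ) < ∑ i, (m i : ℤ)) :
    let t : Fin 4 → Fin 4 → ℤ := fun i j => (m i : ℤ) + m j - d
    let k : ℤ := 2 * d - ∑ i, (m i : ℤ)
    let v : ℤ := intChoose3 ((d : ℤ) + 3) - ∑ i, intChoose3 ((m i : ℤ) + 2) - 1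
    let v' : ℤ := intChoose3 ((d : ℤ) + k + 3) - ∑ i, intChoose3 ((m i : ℤ) + k + 2) - 1
    0 ≤ ∑ p ∈ Finset.univ.filter (fun p : Fin 4 × Fin 4 => p.1 < p.2),
        ((if 2 ≤ t p.1 p.2 then intChoose3 (1 + t p.1 p.2) else 0) -
          (if t p.1 p.2 ≤ -2 then intChoose3 (1 - t p.1 p.2) else 0)) ∧
      v ≤ v' := by
  intro t k v v'
  have hd : 2 * (d:ℤ) < (m 0:ℤ) + m 1 + m 2 + m 3 := by
    rw [Fin.sum_univ_four] at hdec; linarith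
  have h01 : (1:ℤ) ≤ t 0 1 + t 2 3 := by show (1:ℤ) ≤ ((m 0:ℤ) + m 1 - d) + ((m 2:ℤ) + m 3 - d); linarith
  have h02 : (1:ℤ) ≤ t 0 2 + t 1 3 := by show (1:ℤ) ≤ ((m 0:ℤ) + m 2 - d) + ((m 1:ℤ) + m 3 - d); linarith
  have h03 : (1:ℤ) ≤ t 0 3 + t 1 2 := by show (1:ℤ) ≤ ((m 0:ℤ) + m 3 - d) + ((m 1:ℤ) + m 2 - d); linarith
  have p1 := pairf _ _ h01
  have p2 := pairf _ _ h02
  have p3 := pairf _ _ h03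
  constructor
  · have hS : Finset.univ.filter (fun p : Fin 4 × Fin 4 => p.1 < p.2) =
        ({(0,1),(0,2),(0,3),(1,2),(1,3),(2,3)} : Finset (Fin 4 × Fin 4)) := by decide
    rw [hS]
    rw [Finset.sum_insert (by decide), Finset.sum_insert (by decide),
      Finset.sum_insert (by decide), Finset.sum_insert (by decide),
      Finset.sum_insert (by decide), Finset.sum_singleton]
    have e : 6 * (((if 2 ≤ t 0 1 then intChoose3 (1 + t 0 1) else 0) -
          (if t 0 1 ≤ -2 then intChoose3 (1 - t 0 1) else 0)) +
        (((if 2 ≤ t 0 2 then intChoose3 (1 + t 0 2) else 0) -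
          (if t 0 2 ≤ -2 then intChoose3 (1 - t 0 2) else 0)) +
        (((if 2 ≤ t 0 3 then intChoose3 (1 + t 0 3) else 0) -
          (if t 0 3 ≤ -2 then intChoose3 (1 - t 0 3) else 0)) +
        (((if 2 ≤ t 1 2 then intChoose3 (1 + t 1 2) else 0) -
          (if t 1 2 ≤ -2 then intChoose3 (1 - t 1 2) else 0)) +
        (((if 2 ≤ t 1 3 then intChoose3 (1 + t 1 3) else 0) -
          (if t 1 3 ≤ -2 then intChoose3 (1 - t 1 3) else 0)) +
        ((if 2 ≤ t 2 3 then intChoose3 (1 + t 2 3) else 0) -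
          (if t 2 3 ≤ -2 then intChoose3 (1 - t 2 3) else 0))))))) =
        ((t 0 1)^3 - t 0 1) + ((t 0 2)^3 - t 0 2) + ((t 0 3)^3 - t 0 3) +
        ((t 1 2)^3 - t 1 2) + ((t 1 3)^3 - t 1 3) + ((t 2 3)^3 - t 2 3) := by
      linear_combination key (t 0 1) + key (t 0 2) + key (t 0 3) +
        key (t 1 2) + key (t 1 3) + key (t 2 3)
    linarith [e, p1, p2, p3]
  · have hk : k = 2 * (d:ℤ) - ((m 0:ℤ) + m 1 + m 2 + m 3) := by
      show k = _
      simp only [k, Fin.sum_univ_four]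
    have e : 6 * (v' - v) =
        ((t 0 1)^3 - t 0 1) + ((t 0 2)^3 - t 0 2) + ((t 0 3)^3 - t 0 3) +
        ((t 1 2)^3 - t 1 2) + ((t 1 3)^3 - t 1 3) + ((t 2 3)^3 - t 2 3) := by
      show 6 * ((intChoose3 ((d : ℤ) + k + 3) - ∑ i, intChoose3 ((m i : ℤ) + k + 2) - 1) -
        (intChoose3 ((d : ℤ) + 3) - ∑ i, intChoose3 ((m i : ℤ) + 2) - 1)) =
        (((m 0:ℤ) + m 1 - d)^3 - ((m 0:ℤ) + m 1 - d)) +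
        (((m 0:ℤ) + m 2 - d)^3 - ((m 0:ℤ) + m 2 - d)) +
        (((m 0:ℤ) + m 3 - d)^3 - ((m 0:ℤ) + m 3 - d)) +
        (((m 1:ℤ) + m 2 - d)^3 - ((m 1:ℤ) + m 2 - d)) +
        (((m 1:ℤ) + m 3 - d)^3 - ((m 1:ℤ) + m 3 - d)) +
        (((m 2:ℤ) + m 3 - d)^3 - ((m 2:ℤ) + m 3 - d))
      rw [Fin.sum_univ_four, Fin.sum_univ_four, hk]
      linear_combination six_mul_choose ((d:ℤ) + (2 * (d:ℤ) - ((m 0:ℤ) + m 1 + m 2 + m 3)) + 3) -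
        six_mul_choose ((m 0:ℤ) + (2 * (d:ℤ) - ((m 0:ℤ) + m 1 + m 2 + m 3)) + 2) -
        six_mul_choose ((m 1:ℤ) + (2 * (d:ℤ) - ((m 0:ℤ) + m 1 + m 2 + m 3)) + 2) -
        six_mul_choose ((m 2:ℤ) + (2 * (d:ℤ) - ((m 0:ℤ) + m 1 + m 2 + m 3)) + 2) -
        six_mul_choose ((m 3:ℤ) + (2 * (d:ℤ) - ((m 0:ℤ) + m 1 + m 2 + m 3)) + 2) -
        six_mul_choose ((d:ℤ) + 3) +
        six_mul_choose ((m 0:ℤ) + 2) + six_mul_choose ((m 1:ℤ) + 2) +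
        six_mul_choose ((m 2:ℤ) + 2) + six_mul_choose ((m 3:ℤ) + 2)
    linarith [e, p1, p2, p3]
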